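/- arXiv:1411.3442 — 2 statements merged into one kernel-verified Lean document; each statement's English description precedes it below -/
import Mathlib

section
/- Let m > n ≥ 1 be integers, a > 0 and b ≥ 0 reals, and let S_N be the set of pairs (x, y) of reals with 1 ≤ y ≤ x ≤ N and a·yᵐ ≥ a·xᵐ − b·Nⁿ. Then the two-dimensional Lebesgue measure of S_N is o(N²) as N → ∞, i.e., lim_{N→∞} area(S_N)/N² = 0. -/
open MeasureTheory Filter Set

lemma stmt_9_key (m n : ℕ) (hmn : n < m) (a b : ℝ) (ha : 0 < a) (hb : 0 ≤ b)
    (ε : ℝ) (hε : 0 < ε) (N : ℕ) (hN : 1 ≤ N) :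
    (volume {p : ℝ × ℝ | 1 ≤ p.2 ∧ p.2 ≤ p.1 ∧ p.1 ≤ (N : ℝ) ∧
        a * p.2 ^ m ≥ a * p.1 ^ m - b * (N : ℝ) ^ n}).toReal
      ≤ ε ^ 2 * (N : ℝ) ^ 2 + (b / (a * ε ^ (m - 1))) * N := by
  set C : ℝ := b / (a * ε ^ (m - 1)) with hCdef
  have hC0 : 0 ≤ C := div_nonneg hb (mul_pos ha (pow_pos hε _)).le
  have hN1 : (1 : ℝ) ≤ (N : ℝ) := by exact_mod_cast hN
  have hεN : 0 ≤ ε * N := by positivity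
  set A : Set (ℝ × ℝ) := Icc 0 (ε * N) ×ˢ Icc 0 (ε * N) with hAdef
  set B : Set (ℝ × ℝ) := {p : ℝ × ℝ | 0 ≤ p.1 ∧ p.1 ≤ N ∧ p.1 - C ≤ p.2 ∧ p.2 ≤ p.1} with hBdef
  have hsub : {p : ℝ × ℝ | 1 ≤ p.2 ∧ p.2 ≤ p.1 ∧ p.1 ≤ (N : ℝ) ∧
      a * p.2 ^ m ≥ a * p.1 ^ m - b * (N : ℝ) ^ n} ⊆ A ∪ B := by
    rintro ⟨x, y⟩ ⟨h1, h2, h3, h4⟩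
    simp only [ge_iff_le] at h4
    have hy0 : (0 : ℝ) ≤ y := le_trans zero_le_one h1
    have hx0 : (0 : ℝ) ≤ x := hy0.trans h2
    by_cases hc : x ≤ ε * N
    · exact Or.inl ⟨⟨hx0, hc⟩, ⟨hy0, h2.trans hc⟩⟩
    · push_neg at hc
      refine Or.inr ⟨hx0, h3, ?_, h2⟩
      obtain ⟨k, hk⟩ : ∃ k, m - 1 = k := ⟨m - 1, rfl⟩
      have hm1 : m = 1 + k := by omega
      have hym : y ^ m ≤ y * x ^ (m - 1) := by
        rw [hk]
        calc y ^ m = y * y ^ k := by rw [hm1, pow_add, pow_one]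
        _ ≤ y * x ^ k :=
            mul_le_mul_of_nonneg_left (pow_le_pow_left₀ hy0 h2 _) hy0
      have hxx : x ^ m = x * x ^ (m - 1) := by rw [hk, hm1, pow_add, pow_one]
      have hxm : a * (x - y) * x ^ (m - 1) ≤ b * (N : ℝ) ^ n := by nlinarith
      have hpow : ε ^ (m - 1) * (N : ℝ) ^ n ≤ x ^ (m - 1) := by
        calc ε ^ (m - 1) * (N : ℝ) ^ n ≤ ε ^ (m - 1) * (N : ℝ) ^ (m - 1) :=
              mul_le_mul_of_nonneg_left (pow_le_pow_right₀ hN1 (by omega)) (pow_pos hε _).le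
        _ = (ε * N) ^ (m - 1) := (mul_pow _ _ _).symm
        _ ≤ x ^ (m - 1) := pow_le_pow_left₀ hεN hc.le _
      have hxy0 : 0 ≤ x - y := sub_nonneg.2 h2
      have hNn : (0 : ℝ) < (N : ℝ) ^ n := pow_pos (by linarith) _
      have hstep : a * (x - y) * (ε ^ (m - 1) * (N : ℝ) ^ n) ≤ b * (N : ℝ) ^ n := by
        refine le_trans ?_ hxm
        exact mul_le_mul_of_nonneg_left hpow (by positivity)
      have h5 : a * (x - y) * ε ^ (m - 1) ≤ b :=
        le_of_mul_le_mul_right (by linarith) hNn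
      have h6 : x - y ≤ C := by
        rw [hCdef, le_div_iff₀ (mul_pos ha (pow_pos hε _))]
        nlinarith
      linarith
  have hBm : MeasurableSet B := by
    have : B = {p : ℝ × ℝ | 0 ≤ p.1} ∩ {p | p.1 ≤ N} ∩ ({p | p.1 - C ≤ p.2} ∩ {p | p.2 ≤ p.1}) := by
      ext p; simp [hBdef]; tauto
    rw [this]
    exact ((measurableSet_le measurable_const measurable_fst).inter
      (measurableSet_le measurable_fst measurable_const)).inter
      ((measurableSet_le (measurable_fst.sub measurable_const) measurable_snd).inter
      (measurableSet_le measurable_snd measurable_fst))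
  have hvolB : volume B ≤ ENNReal.ofReal C * ENNReal.ofReal N := by
    rw [Measure.volume_eq_prod, Measure.prod_apply hBm]
    have hfun : (fun x => volume (Prod.mk x ⁻¹' B)) =
        (Icc (0 : ℝ) (N : ℝ)).indicator (fun _ => ENNReal.ofReal C) := by
      funext x
      by_cases hx : x ∈ Icc (0 : ℝ) (N : ℝ)
      · have hpre : Prod.mk x ⁻¹' B = Icc (x - C) x := by
          ext y
          simp only [hBdef, mem_preimage, mem_setOf_eq, mem_Icc]
          exact ⟨fun h => ⟨h.2.2.1, h.2.2.2⟩, fun h => ⟨hx.1, hx.2, h.1, h.2⟩⟩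
        rw [hpre, Real.volume_Icc, indicator_of_mem hx]
        congr 1; ring
      · have hpre : Prod.mk x ⁻¹' B = ∅ := by
          ext y
          simp only [hBdef, mem_preimage, mem_setOf_eq, mem_empty_iff_false, iff_false]
          rintro ⟨h1, h2, -⟩
          exact hx ⟨h1, h2⟩
        rw [hpre, indicator_of_notMem hx, measure_empty]
    rw [hfun, lintegral_indicator measurableSet_Icc, setLIntegral_const, Real.volume_Icc]
    simp
  have hvolA : volume A = ENNReal.ofReal (ε * N) * ENNReal.ofReal (ε * N) := by
    rw [hAdef, Measure.volume_eq_prod, Measure.prod_prod, Real.volume_Icc]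
    congr 2 <;> ring
  have hle : volume {p : ℝ × ℝ | 1 ≤ p.2 ∧ p.2 ≤ p.1 ∧ p.1 ≤ (N : ℝ) ∧
      a * p.2 ^ m ≥ a * p.1 ^ m - b * (N : ℝ) ^ n}
      ≤ ENNReal.ofReal (ε ^ 2 * (N : ℝ) ^ 2) + ENNReal.ofReal (C * N) := by
    refine le_trans (measure_mono hsub) (le_trans (measure_union_le _ _) ?_)
    refine add_le_add ?_ ?_
    · rw [hvolA, ← ENNReal.ofReal_mul hεN]
      exact le_of_eq (by congr 1; ring)
    · rw [ENNReal.ofReal_mul hC0]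
      exact hvolB
  calc (volume {p : ℝ × ℝ | 1 ≤ p.2 ∧ p.2 ≤ p.1 ∧ p.1 ≤ (N : ℝ) ∧
        a * p.2 ^ m ≥ a * p.1 ^ m - b * (N : ℝ) ^ n}).toReal
      ≤ (ENNReal.ofReal (ε ^ 2 * (N : ℝ) ^ 2) + ENNReal.ofReal (C * N)).toReal :=
        ENNReal.toReal_mono (by finiteness) hle
    _ ≤ ε ^ 2 * (N : ℝ) ^ 2 + C * N := by
        rw [ENNReal.toReal_add (by finiteness) (by finiteness),
          ENNReal.toReal_ofReal (by positivity), ENNReal.toReal_ofReal (by positivity)]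

theorem stmt_9 (m n : ℕ) (hmn : n < m) (hn : 1 ≤ n) (a b : ℝ) (ha : 0 < a) (hb : 0 ≤ b) :
    Tendsto (fun N : ℕ =>
        (volume {p : ℝ × ℝ | 1 ≤ p.2 ∧ p.2 ≤ p.1 ∧ p.1 ≤ (N : ℝ) ∧
            a * p.2 ^ m ≥ a * p.1 ^ m - b * (N : ℝ) ^ n}).toReal / (N : ℝ) ^ 2)
      atTop (nhds 0) := by
  rw [NormedAddCommGroup.tendsto_nhds_zero]
  intro δ hδ
  set ε : ℝ := min 1 (Real.sqrt (δ / 2)) with hεdef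
  have hε : 0 < ε := lt_min one_pos (Real.sqrt_pos.2 (by linarith))
  have hε2 : ε ^ 2 ≤ δ / 2 := by
    calc ε ^ 2 ≤ Real.sqrt (δ / 2) ^ 2 :=
          pow_le_pow_left₀ hε.le (min_le_right _ _) 2
    _ = δ / 2 := Real.sq_sqrt (by linarith)
  set C : ℝ := b / (a * ε ^ (m - 1)) with hCdef
  have hC0 : 0 ≤ C := div_nonneg hb (mul_pos ha (pow_pos hε _)).le
  have h1 : Tendsto (fun N : ℕ => C / (N : ℝ)) atTop (nhds 0) :=
    tendsto_const_div_atTop_nhds_zero_nat C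
  have h2 : ∀ᶠ N : ℕ in atTop, C / (N : ℝ) < δ / 2 :=
    h1.eventually_lt_const (by linarith)
  filter_upwards [h2, eventually_ge_atTop 1] with N hN2 hN1
  have hNpos : (0 : ℝ) < (N : ℝ) := by exact_mod_cast hN1
  have hkey := stmt_9_key m n hmn a b ha hb ε hε N hN1
  rw [Real.norm_eq_abs, abs_of_nonneg (by positivity)]
  have hdiv : (volume {p : ℝ × ℝ | 1 ≤ p.2 ∧ p.2 ≤ p.1 ∧ p.1 ≤ (N : ℝ) ∧
      a * p.2 ^ m ≥ a * p.1 ^ m - b * (N : ℝ) ^ n}).toReal / (N : ℝ) ^ 2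
      ≤ (ε ^ 2 * (N : ℝ) ^ 2 + C * N) / (N : ℝ) ^ 2 := by
    gcongr
  have heq : (ε ^ 2 * (N : ℝ) ^ 2 + C * N) / (N : ℝ) ^ 2 = ε ^ 2 + C / N := by
    field_simp
  rw [heq] at hdiv
  linarith
end

section
/- For any link function L satisfying Property B with constant Δ = Δ(L), and any pair-matched word w of length 2k, the number of circuits π : {0,…,2k} → {1,…,N} with π(0) = π(2k) corresponding to w is at most N^{k+1} · Δᵏ. -/
theorem stmt_19 (L : ℕ → ℕ → ℤ) (Δ : ℕ)
    (hB : ∀ (N : ℕ) (t : ℤ) (k : ℕ), 1 ≤ k → k ≤ N →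
      ((Finset.Icc 1 N).filter (fun m => L k m = t)).card ≤ Δ)
    (k N : ℕ) (hN : 1 ≤ N)
    (A : Type*) [DecidableEq A] (w : Fin (2 * k) → A)
    (hpair : ∀ i : Fin (2 * k), (Finset.univ.filter (fun j => w j = w i)).card = 2) :
    Nat.card {π : Fin (2 * k + 1) → ℕ //
        (∀ i, π i ∈ Finset.Icc 1 N) ∧ π 0 = π (Fin.last (2 * k)) ∧
        ∀ i j : Fin (2 * k),
          (w i = w j ↔ L (π i.castSucc) (π i.succ) = L (π j.castSucc) (π j.succ))}
      ≤ N ^ (k + 1) * Δ ^ k := by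
  classical
  -- the matching involution σ
  have hex : ∀ i : Fin (2 * k), ∃ j, j ≠ i ∧ w j = w i := by
    intro i
    have hi : i ∈ Finset.univ.filter (fun j => w j = w i) := by simp
    have h1 : ((Finset.univ.filter (fun j => w j = w i)).erase i).card = 1 := by
      rw [Finset.card_erase_of_mem hi, hpair i]
    obtain ⟨a, ha⟩ := Finset.card_eq_one.mp h1
    have ham : a ∈ (Finset.univ.filter (fun j => w j = w i)).erase i := by simp [ha]
    rcases Finset.mem_erase.mp ham with ⟨hne, hmem⟩
    exact ⟨a, hne, (Finset.mem_filter.mp hmem).2⟩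
  choose σ hσne hσw using hex
  have huniq : ∀ i j, j ≠ i → w j = w i → j = σ i := by
    intro i j hj hwj
    have hi : i ∈ Finset.univ.filter (fun l => w l = w i) := by simp
    have h1 : ((Finset.univ.filter (fun l => w l = w i)).erase i).card = 1 := by
      rw [Finset.card_erase_of_mem hi, hpair i]
    obtain ⟨a, ha⟩ := Finset.card_eq_one.mp h1
    have hjm : j ∈ ((Finset.univ.filter (fun l => w l = w i)).erase i) :=
      Finset.mem_erase.mpr ⟨hj, by simp [hwj]⟩
    have hsm : σ i ∈ ((Finset.univ.filter (fun l => w l = w i)).erase i) :=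
      Finset.mem_erase.mpr ⟨hσne i, by simp [hσw i]⟩
    rw [ha, Finset.mem_singleton] at hjm hsm
    rw [hjm, hsm]
  have hσσ : ∀ i, σ (σ i) = i := fun i =>
    (huniq (σ i) i (Ne.symm (hσne i)) (hσw i).symm).symm
  have hσinj : Function.Injective σ := Function.Involutive.injective hσσ
  -- generating (first-occurrence) indices G and the rest G'
  set G : Finset (Fin (2 * k)) := Finset.univ.filter (fun i => i < σ i) with hGdef
  set G' : Finset (Fin (2 * k)) := Finset.univ.filter (fun i => σ i < i) with hG'def
  have hGG' : G.card = G'.card := by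
    apply Finset.card_bij (fun i _ => σ i)
    · intro i hi
      simp only [hGdef, hG'def, Finset.mem_filter, Finset.mem_univ, true_and, hσσ] at *
      exact hi
    · intro a _ b _ h
      exact hσinj h
    · intro b hb
      refine ⟨σ b, ?_, hσσ b⟩
      simp only [hGdef, hG'def, Finset.mem_filter, Finset.mem_univ, true_and, hσσ] at *
      exact hb
  have hneg : Finset.univ.filter (fun i => ¬ i < σ i) = G' := by
    ext i
    simp only [hG'def, Finset.mem_filter, Finset.mem_univ, true_and, not_lt]
    exact ⟨fun h => lt_of_le_of_ne h (hσne i), le_of_lt⟩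
  have hsum : G.card + G'.card = 2 * k := by
    have h := Finset.card_filter_add_card_filter_not
      (s := (Finset.univ : Finset (Fin (2 * k)))) (p := fun i => i < σ i)
    rw [hneg] at h
    simpa using h
  have hGcard : G.card = k := by omega
  have hG'card : G'.card = k := by omega
  have hnotG : ∀ i, i ∉ G → σ i < i := by
    intro i hi
    have h : ¬ i < σ i := by simpa [hGdef] using hi
    exact lt_of_le_of_ne (not_lt.mp h) (hσne i)
  -- abbreviations
  set Ic : Finset ℕ := Finset.Icc 1 N with hIc
  let sfil : (Fin (2 * k + 1) → ℕ) → Fin (2 * k) → Finset ℕ := fun π i =>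
    Ic.filter (fun m => L (π i.castSucc) m = L (π (σ i).castSucc) (π (σ i).succ))
  let Sub := {π : Fin (2 * k + 1) → ℕ //
        (∀ i, π i ∈ Finset.Icc 1 N) ∧ π 0 = π (Fin.last (2 * k)) ∧
        ∀ i j : Fin (2 * k),
          (w i = w j ↔ L (π i.castSucc) (π i.succ) = L (π j.castSucc) (π j.succ))}
  show Nat.card Sub ≤ N ^ (k + 1) * Δ ^ k
  have hmem_s : ∀ (p : Sub) (i : Fin (2 * k)), p.1 i.succ ∈ sfil p.1 i := by
    rintro ⟨π, hmem, h0, hw⟩ i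
    exact Finset.mem_filter.mpr ⟨hmem _, ((hw (σ i) i).mp (hσw i)).symm⟩
  have hcard_s : ∀ (p : Sub) (i : Fin (2 * k)), (sfil p.1 i).card ≤ Δ := by
    rintro ⟨π, hmem, h0, hw⟩ i
    have h := hmem i.castSucc
    rw [Finset.mem_Icc] at h
    exact hB N _ (π i.castSucc) h.1 h.2
  have hidx : ∀ (p : Sub) (i : Fin (2 * k)),
      (sfil p.1 i).toList.idxOf (p.1 i.succ) < Δ := by
    intro p i
    have h1 : (sfil p.1 i).toList.idxOf (p.1 i.succ) < (sfil p.1 i).toList.length :=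
      List.idxOf_lt_length_iff.mpr (Finset.mem_toList.mpr (hmem_s p i))
    rw [Finset.length_toList] at h1
    exact h1.trans_le (hcard_s p i)
  let Φ : Sub → ↥Ic × (↥G → ↥Ic) × (↥G' → Fin Δ) := fun p =>
    (⟨p.1 0, p.2.1 0⟩,
     fun i => ⟨p.1 i.1.succ, p.2.1 _⟩,
     fun i => ⟨(sfil p.1 i.1).toList.idxOf (p.1 i.1.succ), hidx p i.1⟩)
  have hΦ : Function.Injective Φ := by
    intro p q h
    have h1 : p.1 0 = q.1 0 := congrArg (fun x => ((x.1 : ↥Ic) : ℕ)) h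
    have h2 : ∀ i (hi : i ∈ G), p.1 i.succ = q.1 i.succ := by
      intro i hi
      exact congrArg (fun x => ((x.2.1 ⟨i, hi⟩ : ↥Ic) : ℕ)) h
    have h3 : ∀ i (hi : i ∈ G'),
        (sfil p.1 i).toList.idxOf (p.1 i.succ)
          = (sfil q.1 i).toList.idxOf (q.1 i.succ) := by
      intro i hi
      exact congrArg (fun x => ((x.2.2 ⟨i, hi⟩ : Fin Δ) : ℕ)) h
    have key : ∀ n (hn : n < 2 * k + 1), p.1 ⟨n, hn⟩ = q.1 ⟨n, hn⟩ := by
      intro n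
      induction n using Nat.strong_induction_on with
      | _ n IH =>
        intro hn
        match n, hn with
        | 0, hn => exact h1
        | (m + 1), hn =>
          have hm : m < 2 * k := by omega
          have IH' : ∀ x : Fin (2 * k + 1), x.1 ≤ m → p.1 x = q.1 x := by
            intro x hx
            have := IH x.1 (by omega) x.2
            simpa [Fin.eta] using this
          set i : Fin (2 * k) := ⟨m, hm⟩ with hidef
          have hsucc : (⟨m + 1, hn⟩ : Fin (2 * k + 1)) = i.succ := rfl
          rw [hsucc]
          by_cases hG1 : i ∈ G
          · exact h2 i hG1
          · have hσlt : σ i < i := hnotG i hG1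
            have hiG' : i ∈ G' := by
              simp only [hG'def, Finset.mem_filter, Finset.mem_univ, true_and]
              exact hσlt
            have hσm : (σ i).1 < m := hσlt
            have e1 : p.1 i.castSucc = q.1 i.castSucc :=
              IH' i.castSucc (by simp [hidef])
            have e2 : p.1 (σ i).castSucc = q.1 (σ i).castSucc :=
              IH' (σ i).castSucc (by simp; omega)
            have e3 : p.1 (σ i).succ = q.1 (σ i).succ :=
              IH' (σ i).succ (by simp [Fin.val_succ]; omega)
            have es : sfil p.1 i = sfil q.1 i := by
              simp only [sfil, e1, e2, e3]
            have hiden := h3 i hiG'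
            rw [es] at hiden
            have hmp : p.1 i.succ ∈ (sfil q.1 i).toList :=
              Finset.mem_toList.mpr (es ▸ hmem_s p i)
            have hmq : q.1 i.succ ∈ (sfil q.1 i).toList :=
              Finset.mem_toList.mpr (hmem_s q i)
            exact (List.idxOf_inj hmp).mp hiden
    apply Subtype.ext
    funext x
    have := key x.1 x.2
    simpa [Fin.eta] using this
  have hle := Nat.card_le_card_of_injective Φ hΦ
  have hcards : Nat.card (↥Ic × (↥G → ↥Ic) × (↥G' → Fin Δ)) = N ^ (k + 1) * Δ ^ k := by
    rw [Nat.card_prod, Nat.card_prod, Nat.card_fun, Nat.card_fun]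
    have hI : Nat.card ↥Ic = N := by
      rw [Nat.card_eq_fintype_card, Fintype.card_coe, hIc, Nat.card_Icc]; omega
    have hGc : Nat.card ↥G = k := by
      rw [Nat.card_eq_fintype_card, Fintype.card_coe, hGcard]
    have hG'c : Nat.card ↥G' = k := by
      rw [Nat.card_eq_fintype_card, Fintype.card_coe, hG'card]
    rw [hI, hGc, hG'c, Nat.card_eq_fintype_card, Fintype.card_fin]
    ring
  rw [hcards] at hle
  exact hle
end
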